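/- Let F be a field of characteristic ≠ 2 and R an associative unital F-algebra with an involution * of the first kind, and assume S ⊊ R. Let x, y ∈ S be such that xsy ∈ S² for every s ∈ S. Then for every r ∈ R, (xy − yx)r ∈ S²; in other words, the right ideal (xy − yx)R is contained in S². -/

import Mathlib

/-- If `x, y ∈ S` satisfy `xSy ⊆ S²`, then `(xy − yx)R ⊆ S²`. -/
theorem stmt_7 (F R : Type*) [Field F] [Ring R] [Algebra F R] [StarRing R]
    (hchar : (2 : F) ≠ 0)
    (hfirst : Set.center R ⊆ {r : R | star r = r})
    (hproper : {r : R | star r = r} ≠ Set.univ) :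
    ∀ x ∈ {r : R | star r = r}, ∀ y ∈ {r : R | star r = r},
      (∀ s ∈ {r : R | star r = r}, x * s * y ∈
        AddSubgroup.closure {z : R | ∃ a ∈ {r : R | star r = r},
          ∃ b ∈ {r : R | star r = r}, z = a * b}) →
      ∀ r : R, (x * y - y * x) * r ∈
        AddSubgroup.closure {z : R | ∃ a ∈ {r : R | star r = r},
          ∃ b ∈ {r : R | star r = r}, z = a * b} := by
  intro x hx y hy hxy r
  simp only [Set.mem_setOf_eq] at hx hy
  set T : AddSubgroup R := AddSubgroup.closure {z : R | ∃ a ∈ {r : R | star r = r},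
      ∃ b ∈ {r : R | star r = r}, z = a * b} with hT
  -- products of symmetric elements lie in T
  have hmul : ∀ a b : R, star a = a → star b = b → a * b ∈ T := by
    intro a b ha hb
    exact AddSubgroup.subset_closure ⟨a, ha, b, hb, rfl⟩
  -- symmetric elements lie in T
  have hS : ∀ a : R, star a = a → a ∈ T := by
    intro a ha
    simpa using hmul a 1 ha (star_one R)
  -- T is star-closed
  have hstar : ∀ z ∈ T, star z ∈ T := by
    intro z hz
    induction hz using AddSubgroup.closure_induction with
    | mem w hw =>
      obtain ⟨a, ha, b, hb, rfl⟩ := hw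
      simp only [Set.mem_setOf_eq] at ha hb
      refine AddSubgroup.subset_closure ⟨b, hb, a, ha, ?_⟩
      simp [star_mul, ha, hb]
    | zero => simpa using (AddSubgroup.zero_mem _)
    | add u v _ _ hu hv => simpa [star_add] using AddSubgroup.add_mem _ hu hv
    | neg u _ hu => simpa using AddSubgroup.neg_mem _ hu
  have hysx : ∀ s : R, star s = s → y * s * x ∈ T := by
    intro s hs
    have := hstar _ (hxy s hs)
    simpa [star_mul, hx, hy, hs, mul_assoc] using this
  -- case 1 : s symmetric
  have key_s : ∀ s : R, star s = s → (x * y - y * x) * s ∈ T := by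
    intro s hs
    have h1 : x * (y * s + s * y) ∈ T := by
      refine hmul _ _ hx ?_
      simp [star_mul, hy, hs, add_comm]
    have h2 : x * s * y ∈ T := hxy s hs
    have h3 : y * (x * s + s * x) ∈ T := by
      refine hmul _ _ hy ?_
      simp [star_mul, hx, hs, add_comm]
    have h4 : y * s * x ∈ T := hysx s hs
    have hid : (x * y - y * x) * s =
        (x * (y * s + s * y) - x * s * y) - (y * (x * s + s * x) - y * s * x) := by
      noncomm_ring
    rw [hid]
    exact sub_mem (sub_mem h1 h2) (sub_mem h3 h4)
  -- case 2 : k skew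
  have key_k : ∀ k : R, star k = -k → (x * y - y * x) * k ∈ T := by
    intro k hk
    have h1 : x * (y * k - k * y) ∈ T := by
      refine hmul _ _ hx ?_
      simp [star_mul, hy, hk, sub_eq_add_neg, add_comm]
    have h2 : y * (x * k - k * x) ∈ T := by
      refine hmul _ _ hy ?_
      simp [star_mul, hx, hk, sub_eq_add_neg, add_comm]
    have h3 : x * k * y - y * k * x ∈ T := by
      refine hS _ ?_
      simp only [star_sub, star_mul, hx, hy, hk, mul_assoc, mul_neg, neg_mul, neg_neg, star_star]
      abel
    have hid : (x * y - y * x) * k =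
        x * (y * k - k * y) - y * (x * k - k * x) + (x * k * y - y * k * x) := by
      noncomm_ring
    rw [hid]
    exact add_mem (sub_mem h1 h2) h3
  -- decompose r
  set e : R := algebraMap F R (2⁻¹) with he
  have hecent : e ∈ Set.center R := by
    rw [Semigroup.mem_center_iff]
    intro g
    exact (Algebra.commutes _ _).symm
  have hestar : star e = e := hfirst hecent
  have hecomm : ∀ a : R, e * a = a * e := fun a => Algebra.commutes _ _
  have hssym : star (e * (r + star r)) = e * (r + star r) := by
    rw [star_mul, hestar, star_add, star_star, ← hecomm, add_comm]
  have hkskew : star (e * (r - star r)) = -(e * (r - star r)) := by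
    rw [star_mul, hestar, star_sub, star_star, ← hecomm, ← mul_neg, neg_sub]
  have hsum : e * (r + star r) + e * (r - star r) = r := by
    rw [← mul_add]
    have : r + star r + (r - star r) = r + r := by abel
    rw [this, ← two_mul, ← mul_assoc]
    have h2 : e * 2 = 1 := by
      rw [he]
      have h2R : ((2 : R)) = algebraMap F R 2 := (map_ofNat (algebraMap F R) 2).symm
      rw [h2R, ← map_mul, inv_mul_cancel₀ hchar, map_one]
    rw [h2, one_mul]
  have heq : (x * y - y * x) * r
      = (x * y - y * x) * (e * (r + star r)) + (x * y - y * x) * (e * (r - star r)) := by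
    rw [← mul_add, hsum]
  rw [heq]
  exact add_mem (key_s _ hssym) (key_k _ hkskew)
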